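/- For a prime p define 𝔘_p := {n ∈ ℕ : p³ − p ∣ n and p² ∤ n}. Let 𝒫 be a nonempty finite family of odd primes. Then the asymptotic density of ⋂_{q ∈ 𝒫} 𝔘_q exists and equals 0 if there exist p, q ∈ 𝒫 with p² ∣ q² − 1, and equals (∏_{q ∈ 𝒫} (q − 1)) / lcm{q⁴ − q² : q ∈ 𝒫} otherwise. -/

import Mathlib

/-- `𝔘_p = {n : p³ − p ∣ n and p² ∤ n}`. -/
def Uset (p : ℕ) : Set ℕ := {n | (p ^ 3 - p) ∣ n ∧ ¬ p ^ 2 ∣ n}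

/-- `A ⊆ ℕ` has asymptotic density `d`. -/
def hasDensity (A : Set ℕ) (d : ℝ) : Prop :=
  Filter.Tendsto (fun N : ℕ => ((A ∩ Set.Icc 1 N).ncard : ℝ) / N) Filter.atTop (nhds d)


lemma count_window_const {Q : ℕ → Prop} [DecidablePred Q] {m : ℕ} (hm : 0 < m)
    (hper : ∀ n, Q (n + m) ↔ Q n) :
    ∀ a, ((Finset.Ico a (a + m)).filter Q).card = ((Finset.range m).filter Q).card := by
  intro a
  induction a with
  | zero => rw [Finset.range_eq_Ico]; norm_num
  | succ a ih =>
    rw [← ih]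
    have h1 : a + 1 + m = (a + m) + 1 := by omega
    rw [Finset.card_filter, Finset.card_filter, h1,
        Finset.sum_Ico_succ_top (by omega),
        Finset.sum_eq_sum_Ico_succ_bot (show a < a + m by omega)]
    have h2 : (if Q (a + m) then 1 else 0) = (if Q a then 1 else 0) := by
      simp only [hper a]
    rw [h2]; omega

lemma count_range_mul {Q : ℕ → Prop} [DecidablePred Q] {m : ℕ} (hm : 0 < m)
    (hper : ∀ n, Q (n + m) ↔ Q n) (k : ℕ) :
    ((Finset.range (m * k)).filter Q).card = k * ((Finset.range m).filter Q).card := by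
  induction k with
  | zero => simp
  | succ k ih =>
    have h1 : m * (k + 1) = m * k + m := by ring
    have hsplit : Finset.range (m * k + m) = Finset.Ico 0 (m * k) ∪ Finset.Ico (m * k) (m * k + m) := by
      rw [Finset.Ico_union_Ico_eq_Ico (Nat.zero_le _) (by omega), Finset.range_eq_Ico]
    rw [h1, hsplit, Finset.filter_union, Finset.card_union_of_disjoint
        (Finset.disjoint_filter_filter (Finset.Ico_disjoint_Ico_consecutive 0 (m*k) (m*k+m))),
        ← Finset.range_eq_Ico, ih, count_window_const hm hper]
    ring

lemma hasDensity_periodic {Q : ℕ → Prop} [DecidablePred Q] {m : ℕ} (hm : 0 < m)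
    (hper : ∀ n, Q (n + m) ↔ Q n) :
    hasDensity {n | Q n} ((((Finset.range m).filter Q).card : ℝ) / m) := by
  set c := ((Finset.range m).filter Q).card with hc
  set D := fun N => ((Finset.Icc 1 N).filter Q).card with hD
  set C := fun N => ((Finset.range N).filter Q).card with hCdef
  have hCmono : ∀ {a b : ℕ}, a ≤ b → C a ≤ C b :=
    fun h => Finset.card_le_card (Finset.filter_subset_filter _ (Finset.range_subset_range.mpr h))
  have hlow : ∀ N, c * (N / m) ≤ C N := by
    intro N
    calc c * (N / m) = (N / m) * c := mul_comm _ _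
      _ = C (m * (N / m)) := (count_range_mul hm hper _).symm
      _ ≤ C N := hCmono (by rw [mul_comm]; exact Nat.div_mul_le_self N m)
  have hup : ∀ N, C N ≤ c * (N / m) + c := by
    intro N
    have h1 : N ≤ m * (N / m + 1) := by
      have := Nat.lt_div_mul_add (a := N) hm
      have h2 : m * (N / m + 1) = N / m * m + m := by ring
      omega
    calc C N ≤ C (m * (N / m + 1)) := hCmono h1
      _ = (N / m + 1) * c := count_range_mul hm hper _
      _ = c * (N / m) + c := by ring
  have hDC : ∀ N, C (N + 1) ≤ D N + 1 ∧ D N ≤ C (N + 1) := by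
    intro N
    have hins : Finset.range (N + 1) = insert 0 (Finset.Icc 1 N) := by
      ext x; simp only [Finset.mem_range, Finset.mem_insert, Finset.mem_Icc]; omega
    constructor
    · show ((Finset.range (N+1)).filter Q).card ≤ _
      rw [hins, Finset.filter_insert]
      split_ifs
      · exact (Finset.card_insert_le _ _)
      · exact Nat.le_succ _
    · refine Finset.card_le_card (Finset.filter_subset_filter _ ?_)
      intro x hx; simp only [Finset.mem_Icc] at hx; simp only [Finset.mem_range]; omega
  -- real bounds
  have hc0 : (0:ℝ) ≤ (c:ℝ) := Nat.cast_nonneg _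
  have hmR : (0:ℝ) < m := by exact_mod_cast hm
  have hm1 : (1:ℝ) ≤ m := by exact_mod_cast hm
  have hlowR : ∀ N : ℕ, 1 ≤ N → (c:ℝ)/m - ((c:ℝ)+1)/N ≤ (D N : ℝ)/N := by
    intro N hN
    have hNR : (0:ℝ) < N := by exact_mod_cast hN
    set t : ℕ := (N + 1) / m with ht
    have hct : (c:ℝ) * t ≤ (D N : ℝ) + 1 := by
      have h1 : c * t ≤ D N + 1 := le_trans (hlow (N+1)) (hDC N).1
      exact_mod_cast h1
    have htm : ((N:ℝ) + 1) - m < (t:ℝ) * m := by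
      have := Nat.lt_div_mul_add (a := N + 1) hm
      have : ((N:ℝ) + 1) < (t:ℝ) * m + m := by exact_mod_cast this
      linarith
    have hkey : (c:ℝ) * N - ((c:ℝ)+1) * m ≤ (D N : ℝ) * m := by
      nlinarith [mul_le_mul_of_nonneg_left (le_of_lt htm) hc0]
    have e1 : (c:ℝ)/m - ((c:ℝ)+1)/N = ((c:ℝ)*N - ((c:ℝ)+1)*m)/(m*N) := by
      field_simp
    have e2 : (D N : ℝ)/N = ((D N : ℝ)*m)/(m*N) := by
      field_simp
    rw [e1, e2]
    gcongr
  have hupR : ∀ N : ℕ, 1 ≤ N → (D N : ℝ)/N ≤ (c:ℝ)/m + (2*(c:ℝ)+1)/N := by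
    intro N hN
    have hNR : (0:ℝ) < N := by exact_mod_cast hN
    set t : ℕ := (N + 1) / m with ht
    have hct : (D N : ℝ) ≤ (c:ℝ) * t + c := by
      have h1 : D N ≤ c * t + c := le_trans (hDC N).2 (hup (N+1))
      exact_mod_cast h1
    have htm : (t:ℝ) * m ≤ (N:ℝ) + 1 := by
      have h1 : t * m ≤ N + 1 := Nat.div_mul_le_self (N+1) m
      exact_mod_cast h1
    have hkey : (D N : ℝ) * m ≤ (c:ℝ) * N + (2*(c:ℝ)+1) * m := by
      nlinarith [mul_le_mul_of_nonneg_left htm hc0]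
    have e1 : (c:ℝ)/m + (2*(c:ℝ)+1)/N = ((c:ℝ)*N + (2*(c:ℝ)+1)*m)/(m*N) := by
      field_simp
    have e2 : (D N : ℝ)/N = ((D N : ℝ)*m)/(m*N) := by
      field_simp
    rw [e1, e2]
    gcongr
  have hset : ∀ N : ℕ, ({n | Q n} ∩ Set.Icc 1 N).ncard = D N := by
    intro N
    show _ = (Finset.filter Q (Finset.Icc 1 N)).card
    rw [← Set.ncard_coe_finset]
    congr 1
    ext x
    simp only [Set.mem_inter_iff, Set.mem_setOf_eq, Set.mem_Icc, Finset.coe_filter,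
      Finset.mem_Icc]
    tauto
  unfold hasDensity
  simp only [hset]
  have l1 : Filter.Tendsto (fun N : ℕ => (c:ℝ)/m - ((c:ℝ)+1)/N) Filter.atTop (nhds ((c:ℝ)/m)) := by
    have h := tendsto_const_div_atTop_nhds_zero_nat ((c:ℝ)+1)
    simpa using Filter.Tendsto.sub tendsto_const_nhds h
  have l2 : Filter.Tendsto (fun N : ℕ => (c:ℝ)/m + (2*(c:ℝ)+1)/N) Filter.atTop (nhds ((c:ℝ)/m)) := by
    have h := tendsto_const_div_atTop_nhds_zero_nat (2*(c:ℝ)+1)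
    simpa using Filter.Tendsto.add tendsto_const_nhds h
  refine tendsto_of_tendsto_of_tendsto_of_le_of_le' l1 l2 ?_ ?_
  · exact Filter.eventually_atTop.2 ⟨1, hlowR⟩
  · exact Filter.eventually_atTop.2 ⟨1, hupR⟩


lemma finset_lcm_ne_zero : ∀ (s : Finset ℕ) (f : ℕ → ℕ), (∀ i ∈ s, f i ≠ 0) → s.lcm f ≠ 0 := by
  intro s f
  induction s using Finset.cons_induction with
  | empty => intro _; simp
  | cons a s ha ih =>
    intro h
    rw [Finset.cons_eq_insert, Finset.lcm_insert]
    exact Nat.lcm_ne_zero (h a (Finset.mem_cons_self a s)) (ih fun i hi => h i (Finset.mem_cons.2 (Or.inr hi)))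

lemma sq_not_dvd_lcm {q : ℕ} (hq : q.Prime) : ∀ (s : Finset ℕ) (f : ℕ → ℕ),
    (∀ i ∈ s, f i ≠ 0) → (∀ i ∈ s, ¬ q ^ 2 ∣ f i) → ¬ q ^ 2 ∣ s.lcm f := by
  intro s f
  induction s using Finset.cons_induction with
  | empty =>
    intro _ _ hd
    rw [Finset.lcm_empty] at hd
    have := Nat.le_of_dvd one_pos hd
    nlinarith [hq.two_le]
  | cons a s ha ih =>
    intro h0 h2
    have ha0 : f a ≠ 0 := h0 a (Finset.mem_cons_self a s)
    have hs0 : s.lcm f ≠ 0 := finset_lcm_ne_zero s f fun i hi => h0 i (Finset.mem_cons.2 (Or.inr hi))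
    have hihyp := ih (fun i hi => h0 i (Finset.mem_cons.2 (Or.inr hi)))
      (fun i hi => h2 i (Finset.mem_cons.2 (Or.inr hi)))
    rw [Finset.cons_eq_insert, Finset.lcm_insert]
    intro hd
    have hl0 : Nat.lcm (f a) (s.lcm f) ≠ 0 := Nat.lcm_ne_zero ha0 hs0
    have hfac : (Nat.lcm (f a) (s.lcm f)).factorization q
        = max ((f a).factorization q) ((s.lcm f).factorization q) := by
      rw [Nat.factorization_lcm ha0 hs0]; rfl
    have h1 : (f a).factorization q ≤ 1 := by
      by_contra hcon
      exact h2 a (Finset.mem_cons_self a s)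
        ((Nat.Prime.pow_dvd_iff_le_factorization hq ha0).mpr (by omega))
    have h2' : (s.lcm f).factorization q ≤ 1 := by
      by_contra hcon
      exact hihyp ((Nat.Prime.pow_dvd_iff_le_factorization hq hs0).mpr (by omega))
    have := (Nat.Prime.pow_dvd_iff_le_factorization hq hl0).mp hd
    rw [hfac] at this
    omega

lemma totient_prod_primes : ∀ (P : Finset ℕ), (∀ q ∈ P, q.Prime) →
    (∏ q ∈ P, q).totient = ∏ q ∈ P, (q - 1) := by
  intro P
  induction P using Finset.cons_induction with
  | empty => intro _; simp
  | cons a s ha ih =>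
    intro h
    have hpa : a.Prime := h a (Finset.mem_cons_self a s)
    have hcop : a.Coprime (∏ q ∈ s, q) :=
      Nat.Coprime.prod_right fun q hq =>
        (Nat.coprime_primes hpa (h q (Finset.mem_cons.2 (Or.inr hq)))).mpr
          (by rintro rfl; exact ha hq)
    rw [Finset.prod_cons, Finset.prod_cons, Nat.totient_mul hcop,
      Nat.totient_prime hpa, ih fun q hq => h q (Finset.mem_cons.2 (Or.inr hq))]


theorem density_inter_Uset (P : Finset ℕ) (hP : P.Nonempty)
    (hprime : ∀ q ∈ P, q.Prime ∧ Odd q) :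
    hasDensity (⋂ q ∈ P, Uset q)
      (if ∃ p ∈ P, ∃ q ∈ P, p ^ 2 ∣ q ^ 2 - 1 then 0
       else (∏ q ∈ P, ((q : ℝ) - 1)) / ((P.lcm (fun q => q ^ 4 - q ^ 2) : ℕ) : ℝ)) := by
  classical
  have hset : (⋂ q ∈ P, Uset q) = {n | ∀ q ∈ P, (q ^ 3 - q) ∣ n ∧ ¬ q ^ 2 ∣ n} := by
    ext n
    simp only [Set.mem_iInter, Set.mem_setOf_eq, Uset]
  have hp2 : ∀ q ∈ P, 2 ≤ q := fun q hq => (hprime q hq).1.two_le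
  have e34 : ∀ q : ℕ, (q ^ 3 - q) * q = q ^ 4 - q ^ 2 := by
    intro q
    have e1 : q ^ 3 * q = q ^ 4 := by ring
    have e2 : q * q = q ^ 2 := by ring
    rw [Nat.sub_mul, e1, e2]
  have e42 : ∀ q : ℕ, (q ^ 2 - 1) * q ^ 2 = q ^ 4 - q ^ 2 := by
    intro q
    have e1 : q ^ 2 * q ^ 2 = q ^ 4 := by ring
    rw [Nat.sub_mul, e1, one_mul]
  have e31 : ∀ q : ℕ, (q ^ 2 - 1) * q = q ^ 3 - q := by
    intro q
    have e1 : q ^ 2 * q = q ^ 3 := by ring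
    rw [Nat.sub_mul, e1, one_mul]
  by_cases hdeg : ∃ p ∈ P, ∃ q ∈ P, p ^ 2 ∣ q ^ 2 - 1
  · rw [if_pos hdeg]
    obtain ⟨p, hp, q, hq, hpq⟩ := hdeg
    have hempty : (⋂ r ∈ P, Uset r) = ∅ := by
      rw [hset]
      ext n
      simp only [Set.mem_setOf_eq, Set.mem_empty_iff_false, iff_false]
      intro hn
      have hd1 : q ^ 2 - 1 ∣ q ^ 3 - q := ⟨q, (e31 q).symm⟩
      exact (hn p hp).2 (hpq.trans (hd1.trans (hn q hq).1))
    rw [hempty]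
    unfold hasDensity
    simp only [Set.empty_inter, Set.ncard_empty, Nat.cast_zero, zero_div]
    exact tendsto_const_nhds
  · rw [if_neg hdeg]
    push_neg at hdeg
    set L := P.lcm (fun q => q ^ 3 - q) with hLdef
    set Qp := ∏ q ∈ P, q with hQdef
    set M := P.lcm (fun q => q ^ 4 - q ^ 2) with hMdef
    have hq3ne : ∀ q ∈ P, q ^ 3 - q ≠ 0 := by
      intro q hq
      have h2 := hp2 q hq
      have : q < q ^ 3 := by
        calc q = q ^ 1 := (pow_one q).symm
          _ < q ^ 3 := Nat.pow_lt_pow_right (by omega) (by omega)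
      omega
    have hL0 : L ≠ 0 := finset_lcm_ne_zero P _ hq3ne
    have hQ0 : Qp ≠ 0 := by
      rw [hQdef]
      exact Finset.prod_ne_zero_iff.mpr fun q hq => (hprime q hq).1.pos.ne'
    have hqL : ∀ q ∈ P, q ∣ L :=
      fun q hq => dvd_trans (Nat.dvd_sub (dvd_pow_self q three_ne_zero) dvd_rfl)
        (Finset.dvd_lcm hq)
    have hq2L : ∀ q ∈ P, ¬ q ^ 2 ∣ L := by
      intro q hq
      refine sq_not_dvd_lcm (hprime q hq).1 P _ hq3ne ?_
      intro p hp hd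
      have hpp := (hprime p hp).1
      have hqq := (hprime q hq).1
      have hd' : q ^ 2 ∣ (p ^ 2 - 1) * p := by rw [e31 p]; exact hd
      by_cases hpq : p = q
      · have hd'' : q ^ 2 ∣ (q ^ 2 - 1) * q := by rw [hpq] at hd'; exact hd'
        have h1 : q * q ∣ (q ^ 2 - 1) * q := by rw [← pow_two]; exact hd''
        have h2 : q ∣ q ^ 2 - 1 :=
          (Nat.mul_dvd_mul_iff_right (show 0 < q by have := hp2 q hq; omega)).mp h1
        have h3 : q ∣ 1 := by
          have h4 : q ∣ q ^ 2 - (q ^ 2 - 1) := Nat.dvd_sub (dvd_pow_self q two_ne_zero) h2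
          have h5 : q ^ 2 - (q ^ 2 - 1) = 1 := by
            have : 1 ≤ q ^ 2 := by nlinarith [hp2 q hq]
            omega
          rwa [h5] at h4
        have := Nat.le_of_dvd one_pos h3
        have := hp2 q hq
        omega
      · have hcop : Nat.Coprime (q ^ 2) p :=
          Nat.Coprime.pow_left _ ((Nat.coprime_primes hqq hpp).mpr (Ne.symm hpq))
        exact hdeg q hq p hp (hcop.dvd_of_dvd_mul_right hd')
    have hdvd34 : ∀ q ∈ P, q ^ 3 - q ∣ q ^ 4 - q ^ 2 := fun q hq => ⟨q, (e34 q).symm⟩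
    have hLM : L ∣ M := Finset.lcm_dvd fun q hq => (hdvd34 q hq).trans (Finset.dvd_lcm hq)
    have hMLQ : M ∣ L * Qp := by
      refine Finset.lcm_dvd fun q hq => ?_
      rw [← e34 q]
      exact mul_dvd_mul (Finset.dvd_lcm hq) (Finset.dvd_prod_of_mem _ hq)
    have hM0 : M ≠ 0 := by
      intro h
      exact (mul_ne_zero hL0 hQ0) (by rwa [h, zero_dvd_iff] at hMLQ)
    have hdvd2M : ∀ q ∈ P, q ^ 2 ∣ M := by
      intro q hq
      refine dvd_trans ?_ (Finset.dvd_lcm hq)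
      exact ⟨q ^ 2 - 1, by rw [mul_comm, e42 q]⟩
    have hQfact : ∀ r : ℕ, Qp.factorization r = if r ∈ P then 1 else 0 := by
      intro r
      rw [hQdef, Nat.factorization_prod (fun q hq => (hprime q hq).1.pos.ne'),
        Finset.sum_apply',
        Finset.sum_congr rfl
          (fun q hq => by rw [(hprime q hq).1.factorization, Finsupp.single_apply]),
        Finset.sum_ite_eq' P r (fun _ => 1)]
    have hLQM : L * Qp ∣ M := by
      rw [← Nat.factorization_le_iff_dvd (mul_ne_zero hL0 hQ0) hM0, Finsupp.le_def]
      intro r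
      rw [Nat.factorization_mul hL0 hQ0, Finsupp.add_apply]
      by_cases hr : r.Prime
      · by_cases hrP : r ∈ P
        · have h2M : 2 ≤ M.factorization r := by
            rw [← Nat.Prime.pow_dvd_iff_le_factorization hr hM0]
            exact hdvd2M r hrP
          have hL1 : L.factorization r ≤ 1 := by
            by_contra hcon
            exact hq2L r hrP
              ((Nat.Prime.pow_dvd_iff_le_factorization hr hL0).mpr (by omega))
          rw [hQfact r, if_pos hrP]
          omega
        · have hLr : L.factorization r ≤ M.factorization r :=
            Finsupp.le_def.mp ((Nat.factorization_le_iff_dvd hL0 hM0).mpr hLM) r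
          rw [hQfact r, if_neg hrP]
          omega
      · rw [Nat.factorization_eq_zero_of_not_prime L hr,
          Nat.factorization_eq_zero_of_not_prime Qp hr]
        simp [Nat.factorization_eq_zero_of_not_prime M hr]
    have hMeq : M = L * Qp := Nat.dvd_antisymm hMLQ hLQM
    have hMpos : 0 < M := Nat.pos_of_ne_zero hM0
    have hLpos : 0 < L := Nat.pos_of_ne_zero hL0
    set pred := fun n : ℕ => ∀ q ∈ P, (q ^ 3 - q) ∣ n ∧ ¬ q ^ 2 ∣ n with hpreddef
    have hper : ∀ n, pred (n + M) ↔ pred n := by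
      intro n
      refine forall_congr' fun q => imp_congr_right fun hq => ?_
      have hA : q ^ 3 - q ∣ M := (hdvd34 q hq).trans (Finset.dvd_lcm hq)
      rw [add_comm n M, Nat.dvd_add_right hA, Nat.dvd_add_right (hdvd2M q hq)]
    have hkey : ∀ n, pred n ↔ (L ∣ n ∧ ∀ q ∈ P, ¬ q ∣ n / L) := by
      intro n
      constructor
      · intro h
        have hLn : L ∣ n := Finset.lcm_dvd fun q hq => (h q hq).1
        refine ⟨hLn, fun q hq hqd => (h q hq).2 ?_⟩
        have h1 : q * q ∣ L * (n / L) := mul_dvd_mul (hqL q hq) hqd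
        rw [Nat.mul_div_cancel' hLn] at h1
        rwa [← pow_two] at h1
      · rintro ⟨hLn, h⟩
        intro q hq
        refine ⟨(Finset.dvd_lcm (f := fun q => q ^ 3 - q) hq).trans hLn, fun hq2n => ?_⟩
        obtain ⟨L1, hL1⟩ := hqL q hq
        have hqL1 : ¬ q ∣ L1 := fun hd =>
          hq2L q hq (by rw [hL1, pow_two]; exact mul_dvd_mul_left q hd)
        have hn' : n = q * (L1 * (n / L)) := by
          rw [← mul_assoc, ← hL1, Nat.mul_div_cancel' hLn]
        have h1 : q * q ∣ q * (L1 * (n / L)) := by rw [← hn', ← pow_two]; exact hq2n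
        have h2 : q ∣ L1 * (n / L) :=
          (Nat.mul_dvd_mul_iff_left (show 0 < q by have := hp2 q hq; omega)).mp h1
        rcases ((hprime q hq).1.dvd_mul).mp h2 with h3 | h3
        · exact hqL1 h3
        · exact h q hq h3
    have hcount : ((Finset.range M).filter pred).card = ∏ q ∈ P, (q - 1) := by
      have hcop : ∀ k : ℕ, Qp.Coprime k ↔ ∀ q ∈ P, ¬ q ∣ k := by
        intro k
        rw [hQdef, Nat.coprime_prod_left_iff]
        exact forall_congr' fun q => imp_congr_right fun hq =>
          (hprime q hq).1.coprime_iff_not_dvd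
      have hbij : ((Finset.range M).filter pred).card
          = ((Finset.range Qp).filter (fun k => Qp.Coprime k)).card := by
        refine Finset.card_nbij' (fun n => n / L) (fun k => L * k) ?_ ?_ ?_ ?_
        · intro n hn
          rw [Finset.mem_coe, Finset.mem_filter, Finset.mem_range] at hn
          obtain ⟨hnM, hpred⟩ := hn
          obtain ⟨hLn, hnd⟩ := (hkey n).mp hpred
          rw [Finset.mem_coe, Finset.mem_filter, Finset.mem_range]
          refine ⟨(Nat.div_lt_iff_lt_mul hLpos).mpr ?_, (hcop _).mpr hnd⟩
          rw [mul_comm, ← hMeq]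
          exact hnM
        · intro k hk
          rw [Finset.mem_coe, Finset.mem_filter, Finset.mem_range] at hk
          obtain ⟨hkQ, hck⟩ := hk
          rw [Finset.mem_coe, Finset.mem_filter, Finset.mem_range]
          constructor
          · rw [hMeq]
            exact mul_lt_mul_of_pos_left hkQ hLpos
          · refine (hkey _).mpr ⟨dvd_mul_right _ _, ?_⟩
            rw [Nat.mul_div_cancel_left k hLpos]
            exact (hcop k).mp hck
        · intro n hn
          rw [Finset.mem_coe, Finset.mem_filter] at hn
          exact Nat.mul_div_cancel' ((hkey n).mp hn.2).1
        · intro k _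
          exact Nat.mul_div_cancel_left k hLpos
      rw [hbij, ← Nat.totient_eq_card_coprime, hQdef,
        totient_prod_primes P (fun q hq => (hprime q hq).1)]
    have hdens := hasDensity_periodic (Q := pred) hMpos hper
    rw [hcount] at hdens
    rw [hset]
    have hval : (∏ q ∈ P, ((q : ℝ) - 1)) = ((∏ q ∈ P, (q - 1) : ℕ) : ℝ) := by
      rw [Nat.cast_prod]
      refine Finset.prod_congr rfl fun q hq => ?_
      rw [Nat.cast_sub (show 1 ≤ q by have := hp2 q hq; omega), Nat.cast_one]
    rw [hval]
    exact hdens
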